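/- Let Γ be an n-dimensional crystallographic group with point group Π and first Betti number β₁. Then the kernel N of the transfer homomorphism tr : Γ → T equals {b+B ∈ Γ : b ∈ Fix(Π)⊥}, it is the unique normal subgroup of Γ with Γ/N free abelian of rank β₁, and Span(N) = Fix(Π)⊥ while Span(Z(Γ)) = Fix(Π), so N and Z(Γ) are orthogonal complete normal subgroups. -/

import Mathlib

noncomputable section

/-- Euclidean `n`-space. -/
abbrev E (n : ℕ) := EuclideanSpace ℝ (Fin n)

/-- An isometry `a + A` of `E n`, acting by `x ↦ a + A x`, with `A` a linear isometry
(an element of `O(n)`). -/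
@[ext] structure Iso (n : ℕ) where
  a : E n
  A : E n ≃ₗᵢ[ℝ] E n

namespace Iso

variable {n : ℕ}

instance : Mul (Iso n) := ⟨fun x y => ⟨x.a + x.A y.a, y.A.trans x.A⟩⟩
instance : One (Iso n) := ⟨⟨0, LinearIsometryEquiv.refl ℝ (E n)⟩⟩
instance : Inv (Iso n) := ⟨fun x => ⟨-(x.A.symm x.a), x.A.symm⟩⟩

@[simp] lemma mul_a (x y : Iso n) : (x * y).a = x.a + x.A y.a := rfl
@[simp] lemma mul_A (x y : Iso n) : (x * y).A = y.A.trans x.A := rfl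
@[simp] lemma one_a : (1 : Iso n).a = 0 := rfl
@[simp] lemma one_A : (1 : Iso n).A = LinearIsometryEquiv.refl ℝ (E n) := rfl
@[simp] lemma inv_a (x : Iso n) : (x⁻¹).a = -(x.A.symm x.a) := rfl
@[simp] lemma inv_A (x : Iso n) : (x⁻¹).A = x.A.symm := rfl

/-- The group of isometries of `E n`, with composition as multiplication. -/
instance : Group (Iso n) where
  mul_assoc x y z := by
    refine Iso.ext ?_ ?_
    · simp [add_assoc]
    · ext v; simp
  one_mul x := by refine Iso.ext ?_ ?_ <;> simp
  mul_one x := by refine Iso.ext ?_ ?_ <;> simp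
  inv_mul_cancel x := by
    refine Iso.ext ?_ ?_
    · simp
    · ext v; simp

/-- The action of the isometry `a + A` on a point `x` of `E n`: `x ↦ a + A x`. -/
def act (g : Iso n) (x : E n) : E n := g.a + g.A x

/-- The translation `a + I`. -/
def trans (a : E n) : Iso n := ⟨a, LinearIsometryEquiv.refl ℝ (E n)⟩

/-- `g` is a translation if its linear part is the identity. -/
def IsTranslation (g : Iso n) : Prop := g.A = LinearIsometryEquiv.refl ℝ (E n)

/-- The subgroup of all translations of `E n`. -/
def translations (n : ℕ) : Subgroup (Iso n) where
  carrier := {g | g.IsTranslation}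
  mul_mem' := by
    intro x y hx hy
    simp only [Set.mem_setOf_eq, IsTranslation] at *
    rw [mul_A, hx, hy]; simp
  one_mem' := rfl
  inv_mem' := by
    intro x hx
    simp only [Set.mem_setOf_eq, IsTranslation] at *
    rw [inv_A, hx]; rfl

/-- The set of translation vectors of a set `S` of isometries:
`{a : E n | a + I ∈ S}`. -/
def transVecs (S : Set (Iso n)) : Set (E n) := {a | Iso.trans a ∈ S}

/-- `Span(S)`: the real linear span of the translation vectors of `S`. -/
def spanS (S : Set (Iso n)) : Submodule ℝ (E n) :=
  Submodule.span ℝ (transVecs S)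

/-- A crystallographic (space) group: a group of isometries of `E n` that acts
properly discontinuously (equivalently, is discrete) and cocompactly. -/
def IsCrystallographic (Γ : Subgroup (Iso n)) : Prop :=
  (∀ K : Set (E n), IsCompact K →
      {g : Iso n | g ∈ Γ ∧ ((Iso.act g '' K) ∩ K).Nonempty}.Finite) ∧
  ∃ K : Set (E n), IsCompact K ∧ ∀ x : E n, ∃ g ∈ Γ, g.act x ∈ K

/-- `N` is a normal subgroup of `Γ`. -/
def IsNormalIn (N Γ : Subgroup (Iso n)) : Prop :=
  N ≤ Γ ∧ ∀ g ∈ Γ, ∀ x ∈ N, g * x * g⁻¹ ∈ N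

/-- The completion of `S` in `Γ`:
`S̄ = {b+B ∈ Γ : b ∈ Span(S) and Span(S)ᗮ ⊆ Fix(B)}`. -/
def completion (Γ : Subgroup (Iso n)) (S : Set (Iso n)) : Set (Iso n) :=
  {g | g ∈ Γ ∧ g.a ∈ spanS S ∧ ∀ x ∈ (spanS S)ᗮ, g.A x = x}

end Iso

/-- The fixed subspace `Fix(P) = {x : A x = x for all A ∈ P}`. -/
def fixSubmodule {n : ℕ} (P : Finset (E n ≃ₗᵢ[ℝ] E n)) : Submodule ℝ (E n) where
  carrier := {x | ∀ A ∈ P, A x = x}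
  add_mem' := by
    intro x y hx hy A hA
    simp only [map_add, hx A hA, hy A hA]
  zero_mem' := by intro A hA; simp
  smul_mem' := by
    intro c x hx A hA
    simp only [map_smul, hx A hA]


section Aux
set_option linter.unusedSectionVars false
open Iso

variable {n : ℕ} (Γ : Subgroup (Iso n)) (P : Finset (E n ≃ₗᵢ[ℝ] E n))

local notation "⟪" x ", " y "⟫" => @inner ℝ _ _ x y

variable (hP : ∀ A : E n ≃ₗᵢ[ℝ] E n, A ∈ P ↔ ∃ a : E n, (⟨a, A⟩ : Iso n) ∈ Γ)

include hP

lemma memP_of_mem {g : Iso n} (hg : g ∈ Γ) : g.A ∈ P :=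
  (hP g.A).mpr ⟨g.a, by cases g; exact hg⟩

lemma one_memP : LinearIsometryEquiv.refl ℝ (E n) ∈ P :=
  (hP _).mpr ⟨0, Γ.one_mem⟩

lemma mul_memP {A B : E n ≃ₗᵢ[ℝ] E n} (hA : A ∈ P) (hB : B ∈ P) : A.trans B ∈ P := by
  obtain ⟨a, ha⟩ := (hP A).mp hA
  obtain ⟨b, hb⟩ := (hP B).mp hB
  exact (hP _).mpr ⟨((⟨b, B⟩ : Iso n) * ⟨a, A⟩).a, by
    have := Γ.mul_mem hb ha
    convert this using 2; rfl⟩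

lemma inv_memP {A : E n ≃ₗᵢ[ℝ] E n} (hA : A ∈ P) : A.symm ∈ P := by
  obtain ⟨a, ha⟩ := (hP A).mp hA
  exact (hP _).mpr ⟨((⟨a, A⟩ : Iso n)⁻¹).a, by
    have := Γ.inv_mem ha
    convert this using 2; rfl⟩

/-- reindexing: right composition by `B ∈ P` permutes `P`. -/
lemma sum_P_comp {B : E n ≃ₗᵢ[ℝ] E n} (hB : B ∈ P) (v : E n) :
    ∑ A ∈ P, A (B v) = ∑ A ∈ P, A v := by
  refine Finset.sum_nbij' (fun A => B.trans A) (fun A => B.symm.trans A) ?_ ?_ ?_ ?_ ?_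
  · intro A hA; exact mul_memP Γ P hP hB hA
  · intro A hA; exact mul_memP Γ P hP (inv_memP Γ P hP hB) hA
  · intro A hA; ext v; simp
  · intro A hA; ext v; simp
  · intro A hA; simp

/-- reindexing: left composition by `B ∈ P` permutes `P`. -/
lemma sum_P_comp' {B : E n ≃ₗᵢ[ℝ] E n} (hB : B ∈ P) (v : E n) :
    ∑ A ∈ P, B (A v) = ∑ A ∈ P, A v := by
  refine Finset.sum_nbij' (fun A => A.trans B) (fun A => A.trans B.symm) ?_ ?_ ?_ ?_ ?_
  · intro A hA; exact mul_memP Γ P hP hA hB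
  · intro A hA; exact mul_memP Γ P hP hA (inv_memP Γ P hP hB)
  · intro A hA; ext v; simp
  · intro A hA; ext v; simp
  · intro A hA; simp

lemma sum_mem_fix (v : E n) : (∑ A ∈ P, A v) ∈ fixSubmodule P := by
  intro B hB
  rw [map_sum]
  exact sum_P_comp' Γ P hP hB v

lemma inner_fix {A : E n ≃ₗᵢ[ℝ] E n} (hA : A ∈ P) (v y : E n) (hy : y ∈ fixSubmodule P) :
    ⟪A v, y⟫ = ⟪v, y⟫ := by
  have h1 := A.inner_map_map v (A.symm y)
  rw [A.apply_symm_apply] at h1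
  rw [h1, hy A.symm (inv_memP Γ P hP hA)]

lemma sum_inner_fix (v y : E n) (hy : y ∈ fixSubmodule P) :
    ⟪∑ A ∈ P, A v, y⟫ = (P.card : ℝ) * ⟪v, y⟫ := by
  rw [sum_inner]
  rw [Finset.sum_congr rfl fun A hA => inner_fix Γ P hP hA v y hy]
  simp [mul_comm]

/-- Key scalar lemma: `∑_{A ∈ P} A v = 0 ↔ v ∈ Fix(P)ᗮ`. -/
lemma key1 (v : E n) : (∑ A ∈ P, A v) = 0 ↔ v ∈ (fixSubmodule P)ᗮ := by
  have hcard : (0 : ℝ) < P.card := by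
    exact_mod_cast Finset.card_pos.mpr ⟨_, one_memP Γ P hP⟩
  constructor
  · intro h
    rw [Submodule.mem_orthogonal]
    intro y hy
    have := sum_inner_fix Γ P hP v y hy
    rw [h] at this
    simp only [inner_zero_left] at this
    rw [real_inner_comm]
    nlinarith [this]
  · intro h
    have hfix := sum_mem_fix Γ P hP v
    have h0 : ⟪∑ A ∈ P, A v, ∑ A ∈ P, A v⟫ = 0 := by
      rw [sum_inner_fix Γ P hP v _ hfix]
      have : ⟪v, ∑ A ∈ P, A v⟫ = 0 := by
        rw [real_inner_comm]
        exact (Submodule.mem_orthogonal _ v).mp h _ hfix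
      rw [this, mul_zero]
    exact inner_self_eq_zero.mp h0

@[simp] lemma trans_a (v : E n) : (Iso.trans v).a = v := rfl
@[simp] lemma trans_A (v : E n) : (Iso.trans v).A = LinearIsometryEquiv.refl ℝ (E n) := rfl

omit hP

lemma trans_add (u v : E n) : Iso.trans (u + v) = Iso.trans u * Iso.trans v := by
  refine Iso.ext ?_ ?_ <;> simp [Iso.trans]

lemma trans_zero : Iso.trans (0 : E n) = 1 := rfl

lemma trans_neg (v : E n) : Iso.trans (-v) = (Iso.trans v)⁻¹ := by
  refine eq_inv_of_mul_eq_one_left ?_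
  rw [← trans_add, neg_add_cancel, trans_zero]

lemma trans_injective : Function.Injective (Iso.trans (n := n)) := by
  intro u v h
  exact congrArg Iso.a h

lemma conj_trans (g : Iso n) (s : E n) : g * Iso.trans s * g⁻¹ = Iso.trans (g.A s) := by
  refine Iso.ext ?_ ?_
  · simp [Iso.trans]
  · ext v; simp [Iso.trans]

/-- The additive group of translation vectors of `Γ`. -/
def LAdd : AddSubgroup (E n) where
  carrier := {v | Iso.trans v ∈ Γ}
  add_mem' := by intro u v hu hv; simp only [Set.mem_setOf_eq, trans_add]; exact Γ.mul_mem hu hv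
  zero_mem' := by simp only [Set.mem_setOf_eq, trans_zero]; exact Γ.one_mem
  neg_mem' := by intro v hv; simp only [Set.mem_setOf_eq, trans_neg]; exact Γ.inv_mem hv

lemma mem_LAdd {v : E n} : v ∈ LAdd Γ ↔ Iso.trans v ∈ Γ := Iff.rfl

include hP

lemma LAdd_mapP {A : E n ≃ₗᵢ[ℝ] E n} (hA : A ∈ P) {v : E n} (hv : v ∈ LAdd Γ) :
    A v ∈ LAdd Γ := by
  obtain ⟨a, ha⟩ := (hP A).mp hA
  have : (⟨a, A⟩ : Iso n) * Iso.trans v * (⟨a, A⟩ : Iso n)⁻¹ ∈ Γ :=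
    Γ.mul_mem (Γ.mul_mem ha hv) (Γ.inv_mem ha)
  rwa [conj_trans] at this

lemma span_LAdd_mapP {A : E n ≃ₗᵢ[ℝ] E n} (hA : A ∈ P) {v : E n}
    (hv : v ∈ Submodule.span ℝ (LAdd Γ : Set (E n))) :
    A v ∈ Submodule.span ℝ (LAdd Γ : Set (E n)) := by
  induction hv using Submodule.span_induction with
  | mem x hx => exact Submodule.subset_span (LAdd_mapP Γ P hP hA hx)
  | zero => simp
  | add x y _ _ hx hy => rw [map_add]; exact Submodule.add_mem _ hx hy
  | smul c x _ hx => rw [map_smul]; exact Submodule.smul_mem _ c hx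

omit hP

/-- Discreteness: bounded pieces of `LAdd` are finite. -/
lemma LAdd_finite_ball (hΓ : Iso.IsCrystallographic Γ) (r : ℝ) :
    {v : E n | v ∈ LAdd Γ ∧ ‖v‖ ≤ r}.Finite := by
  have hK : IsCompact (Metric.closedBall (0 : E n) (max r 0)) := isCompact_closedBall _ _
  have hfin := hΓ.1 _ hK
  have hsub : {v : E n | v ∈ LAdd Γ ∧ ‖v‖ ≤ r} ⊆
      Iso.trans ⁻¹' {g : Iso n | g ∈ Γ ∧ ((Iso.act g '' Metric.closedBall 0 (max r 0)) ∩
        Metric.closedBall 0 (max r 0)).Nonempty} := by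
    rintro v ⟨hv, hr⟩
    refine ⟨hv, v, ⟨0, ?_, ?_⟩, ?_⟩
    · simp [le_max_right]
    · simp [Iso.act, Iso.trans]
    · simp only [Metric.mem_closedBall, dist_zero_right]
      exact le_trans hr (le_max_left _ _)
  exact (hfin.preimage (trans_injective.injOn)).subset hsub

lemma LAdd_separated (hΓ : Iso.IsCrystallographic Γ) :
    ∃ ε > (0:ℝ), ∀ v ∈ LAdd Γ, v ≠ 0 → ε ≤ ‖v‖ := by
  have hfin : {v : E n | (v ∈ LAdd Γ ∧ ‖v‖ ≤ 1) ∧ v ≠ 0}.Finite := by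
    refine ((LAdd_finite_ball Γ hΓ 1).subset ?_)
    rintro v ⟨h, _⟩; exact h
  set S := hfin.toFinset with hS
  by_cases hne : S.Nonempty
  · set F := S.image (fun v => ‖v‖) with hF
    have hFne : F.Nonempty := hne.image _
    refine ⟨min (F.min' hFne) 1, ?_, ?_⟩
    · refine lt_min ?_ one_pos
      obtain ⟨v, hv, hveq⟩ := Finset.mem_image.mp (F.min'_mem hFne)
      rw [← hveq]
      have : v ≠ 0 := (hfin.mem_toFinset.mp hv).2
      exact norm_pos_iff.mpr this
    · intro v hv hv0
      rcases le_or_gt ‖v‖ 1 with h1 | h1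
      · have hvS : v ∈ S := hfin.mem_toFinset.mpr ⟨⟨hv, h1⟩, hv0⟩
        exact le_trans (min_le_left _ _) (F.min'_le _ (Finset.mem_image_of_mem _ hvS))
      · exact le_trans (min_le_right _ _) h1.le
  · refine ⟨1, one_pos, ?_⟩
    intro v hv hv0
    by_contra hlt
    push_neg at hlt
    exact hne ⟨v, hfin.mem_toFinset.mpr ⟨⟨hv, hlt.le⟩, hv0⟩⟩

/-- The lattice of translations as a `ℤ`-submodule. -/
def Lsub : Submodule ℤ (E n) := (LAdd Γ).toIntSubmodule

lemma Lsub_discrete (hΓ : Iso.IsCrystallographic Γ) : DiscreteTopology (Lsub Γ) := by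
  obtain ⟨ε, hε, hsep⟩ := LAdd_separated Γ hΓ
  rw [discreteTopology_iff_isOpen_singleton]
  rintro ⟨x, hx⟩
  have : {(⟨x, hx⟩ : Lsub Γ)} = (Subtype.val) ⁻¹' (Metric.ball x ε) := by
    ext ⟨y, hy⟩
    simp only [Set.mem_singleton_iff, Set.mem_preimage, Metric.mem_ball, Subtype.ext_iff]
    constructor
    · rintro rfl; simpa using hε
    · intro hlt
      by_contra hne
      have hmem : y - x ∈ LAdd Γ := (LAdd Γ).sub_mem hy hx
      have := hsep _ hmem (sub_ne_zero.mpr hne)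
      rw [dist_eq_norm] at hlt
      linarith
  rw [this]
  exact continuous_subtype_val.isOpen_preimage _ Metric.isOpen_ball

include hP

lemma span_LAdd_top (hΓ : Iso.IsCrystallographic Γ) :
    Submodule.span ℝ (LAdd Γ : Set (E n)) = ⊤ := by
  classical
  by_contra hne
  set W := Submodule.span ℝ (LAdd Γ : Set (E n)) with hW
  have : Wᗮ ≠ ⊥ := by
    intro h
    exact hne (Submodule.orthogonal_eq_bot_iff.mp h)
  obtain ⟨u, hu, hu0⟩ := Submodule.exists_mem_ne_zero_of_ne_bot this
  set u' := ‖u‖⁻¹ • u with hu'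
  have hu'W : u' ∈ Wᗮ := Wᗮ.smul_mem _ hu
  have hu'n : ‖u'‖ = 1 := by
    rw [hu', norm_smul, norm_inv, norm_norm, inv_mul_cancel₀ (norm_ne_zero_iff.mpr hu0)]
  obtain ⟨K, hK, hcover⟩ := hΓ.2
  obtain ⟨CK, hCK⟩ := hK.isBounded.exists_norm_le
  -- choice of representatives
  set h : (E n ≃ₗᵢ[ℝ] E n) → E n := fun A =>
    if hA : A ∈ P then Classical.choose ((hP A).mp hA) else 0 with hh
  have hhspec : ∀ A ∈ P, (⟨h A, A⟩ : Iso n) ∈ Γ := by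
    intro A hA
    simp only [hh, dif_pos hA]
    exact Classical.choose_spec ((hP A).mp hA)
  set CA := ∑ A ∈ P, ‖h A‖ with hCA
  have hCAle : ∀ A ∈ P, ‖h A‖ ≤ CA := by
    intro A hA
    exact Finset.single_le_sum (fun B _ => norm_nonneg (h B)) hA
  set R := CK + CA + 1 with hR
  obtain ⟨g, hg, hgK⟩ := hcover (R • u')
  set B := g.A with hB
  have hBP : B ∈ P := memP_of_mem Γ P hP hg
  set t := g * (⟨h B, B⟩ : Iso n)⁻¹ with ht
  have htΓ : t ∈ Γ := Γ.mul_mem hg (Γ.inv_mem (hhspec B hBP))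
  have htA : t.A = LinearIsometryEquiv.refl ℝ (E n) := by
    simp [ht, hB]
  have htL : t.a ∈ LAdd Γ := by
    rw [mem_LAdd]
    have : Iso.trans t.a = t := by
      refine Iso.ext rfl htA.symm
    rwa [this]
  have hta : t.a = g.a - h B := by
    simp [ht, hB, sub_eq_add_neg]
  -- inner products with B u'
  have hBu'W : B u' ∈ Wᗮ := by
    rw [Submodule.mem_orthogonal]
    intro w hw
    have h1 := B.inner_map_map (B.symm w) u'
    rw [B.apply_symm_apply] at h1
    rw [h1]
    exact (Submodule.mem_orthogonal W u').mp hu'W _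
      (span_LAdd_mapP Γ P hP (inv_memP Γ P hP hBP) hw)
  have hk : ‖g.a + B (R • u')‖ ≤ CK := hCK _ hgK
  have hinner : ⟪g.a + B (R • u'), B u'⟫ = ⟪h B, B u'⟫ + R := by
    have hga : g.a = t.a + h B := by rw [hta]; abel
    rw [hga, map_smul]
    rw [inner_add_left, inner_add_left, real_inner_smul_left]
    have h2 : ⟪t.a, B u'⟫ = 0 :=
      (Submodule.mem_orthogonal W (B u')).mp hBu'W _ (Submodule.subset_span htL)
    have h3 : ⟪B u', B u'⟫ = 1 := by
      rw [B.inner_map_map, real_inner_self_eq_norm_sq, hu'n]; norm_num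
    rw [h2, h3, mul_one, zero_add]
  have habs : R ≤ CK + CA := by
    have h4 : ⟪g.a + B (R • u'), B u'⟫ ≤ CK := by
      calc ⟪g.a + B (R • u'), B u'⟫ ≤ ‖g.a + B (R • u')‖ * ‖B u'‖ := real_inner_le_norm _ _
      _ ≤ CK * 1 := by
          apply mul_le_mul hk ?_ (norm_nonneg _) ((norm_nonneg _).trans hk)
          rw [B.norm_map, hu'n]
      _ = CK := mul_one _
    have h5 : -CA ≤ ⟪h B, B u'⟫ := by
      have := abs_real_inner_le_norm (h B) (B u')
      have h6 : ‖h B‖ * ‖B u'‖ ≤ CA := by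
        rw [B.norm_map, hu'n, mul_one]; exact hCAle B hBP
      cases abs_le.mp this with
      | intro h7 h8 => linarith
    rw [hinner] at h4
    linarith
  linarith

omit hP

/-- The key lattice lemma: a lattice vector in the real span of a full sub-lattice has a
positive multiple inside it. -/
lemma lat (hΓ : Iso.IsCrystallographic Γ) (hP : ∀ A : E n ≃ₗᵢ[ℝ] E n, A ∈ P ↔ ∃ a : E n, (⟨a, A⟩ : Iso n) ∈ Γ)
    (M2 : AddSubgroup (E n)) (hM2L : (M2 : Set (E n)) ⊆ (LAdd Γ : Set (E n)))
    (hspan : Submodule.span ℝ (M2 : Set (E n)) = ⊤)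
    (c : E n) (hc : c ∈ LAdd Γ) :
    ∃ r : ℕ, 0 < r ∧ (r : ℤ) • c ∈ M2 := by
  classical
  have hdisc : DiscreteTopology (Lsub Γ) := Lsub_discrete Γ hΓ
  have hZL : IsZLattice ℝ (Lsub Γ) := ⟨by
    rw [show ((Lsub Γ : Submodule ℤ (E n)) : Set (E n)) = (LAdd Γ : Set (E n)) from rfl]
    exact span_LAdd_top Γ P hP hΓ⟩
  have hfinite : Module.Finite ℤ (Lsub Γ) := inferInstance
  have hrank : Module.finrank ℤ (Lsub Γ) = n := by
    rw [ZLattice.rank ℝ (Lsub Γ)]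
    exact finrank_euclideanSpace_fin
  obtain ⟨s, hsub, hsp, hli⟩ := exists_linearIndependent ℝ (M2 : Set (E n))
  rw [hspan] at hsp
  have hsfin : s.Finite := hli.setFinite
  have : Fintype s := hsfin.fintype
  have hcard : n ≤ s.toFinset.card := by
    have h1 := finrank_span_le_card (R := ℝ) s
    rw [hsp] at h1
    rw [finrank_top ℝ (E n), finrank_euclideanSpace_fin] at h1
    exact h1
  set v : Option s → E n := fun o => o.elim c Subtype.val with hv
  by_cases hind : LinearIndependent ℤ v
  · exfalso
    have hvals : ∀ o, v o ∈ Lsub Γ := by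
      rintro (_ | ⟨x, hx⟩)
      · exact hc
      · exact hM2L (hsub hx)
    set w : Option s → Lsub Γ := fun o => ⟨v o, hvals o⟩ with hw
    have hindw : LinearIndependent ℤ w := by
      have : v = (Lsub Γ).subtype ∘ w := rfl
      rw [this] at hind
      exact LinearIndependent.of_comp _ hind
    have hle := hindw.fintype_card_le_finrank
    rw [hrank, Fintype.card_option] at hle
    rw [Set.toFinset_card] at hcard
    omega
  · rw [Fintype.not_linearIndependent_iff] at hind
    obtain ⟨g, hsum, i, hgi⟩ := hind
    have hsum' : g none • c + ∑ x : s, g (some x) • (x : E n) = 0 := by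
      rw [Fintype.sum_option] at hsum
      exact hsum
    by_cases hg0 : g none = 0
    · exfalso
      have hli' := Fintype.linearIndependent_iff.mp hli (fun x => (g (some x) : ℝ))
      have hz : ∑ x : s, (g (some x) : ℝ) • (x : E n) = 0 := by
        have : ∑ x : s, (g (some x) : ℝ) • (x : E n) = ∑ x : s, g (some x) • (x : E n) := by
          refine Finset.sum_congr rfl fun x _ => ?_
          rw [Int.cast_smul_eq_zsmul]
        rw [this]
        rw [hg0, zero_smul, zero_add] at hsum'
        exact hsum'
      have hall := hli' hz
      rcases i with _ | x
      · exact hgi hg0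
      · exact hgi (by exact_mod_cast hall x)
    · have hmem : g none • c ∈ M2 := by
        have : g none • c = -∑ x : s, g (some x) • (x : E n) := by
          rw [eq_neg_iff_add_eq_zero]; exact hsum'
        rw [this]
        refine M2.neg_mem (AddSubgroup.sum_mem _ fun x _ => AddSubgroup.zsmul_mem _ (hsub x.2) _)
      refine ⟨(g none).natAbs, Int.natAbs_pos.mpr hg0, ?_⟩
      rcases Int.natAbs_eq (g none) with h | h
      · rw [← h]; exact hmem
      · rw [← neg_neg ((g none).natAbs : ℤ), ← h, neg_smul]
        exact M2.neg_mem hmem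

/-- Generators `B s - s`. -/
def genSet : Set (E n) := {v | ∃ B ∈ P, ∃ s ∈ LAdd Γ, v = B s - s}

include hP

lemma genSet_subset_LAdd : genSet Γ P ⊆ (LAdd Γ : Set (E n)) := by
  rintro v ⟨B, hB, s, hs, rfl⟩
  exact (LAdd Γ).sub_mem (LAdd_mapP Γ P hP hB hs) hs

lemma genSet_subset_orth : genSet Γ P ⊆ ((fixSubmodule P)ᗮ : Set (E n)) := by
  rintro v ⟨B, hB, s, hs, rfl⟩
  rw [SetLike.mem_coe, Submodule.mem_orthogonal]
  intro u hu
  rw [inner_sub_right]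
  have h1 : ⟪u, B s⟫ = ⟪u, s⟫ := by
    have h2 := B.inner_map_map (B.symm u) s
    rw [B.apply_symm_apply] at h2
    rw [h2, hu B.symm (inv_memP Γ P hP hB)]
  rw [h1, sub_self]

lemma span_genSet (hΓ : Iso.IsCrystallographic Γ) :
    Submodule.span ℝ (genSet Γ P) = (fixSubmodule P)ᗮ := by
  refine le_antisymm (Submodule.span_le.mpr (genSet_subset_orth Γ P hP)) ?_
  have horth : (Submodule.span ℝ (genSet Γ P))ᗮ ≤ fixSubmodule P := by
    intro x hx
    intro A hA
    have key : ∀ B ∈ P, B.symm x = x := by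
      intro B hB
      have hyp : B.symm x - x ∈ (Submodule.span ℝ (LAdd Γ : Set (E n)))ᗮ := by
        rw [Submodule.mem_orthogonal]
        intro w hw
        induction hw using Submodule.span_induction with
        | mem s hs =>
          have hgen : B s - s ∈ genSet Γ P := ⟨B, hB, s, hs, rfl⟩
          have h0 : ⟪B s - s, x⟫ = 0 :=
            (Submodule.mem_orthogonal _ x).mp hx _ (Submodule.subset_span hgen)
          have h1 : ⟪s, B.symm x⟫ = ⟪B s, x⟫ := by
            have h2 := B.inner_map_map s (B.symm x)
            rw [B.apply_symm_apply] at h2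
            exact h2.symm
          rw [inner_sub_right, h1]
          rw [inner_sub_left] at h0
          exact h0
        | zero => simp
        | add a b _ _ ha hb => rw [inner_add_left]; rw [ha, hb, add_zero]
        | smul c a _ ha => rw [inner_smul_left]; rw [ha, mul_zero]
      rw [span_LAdd_top Γ P hP hΓ, Submodule.top_orthogonal_eq_bot, Submodule.mem_bot] at hyp
      have := sub_eq_zero.mp hyp
      exact this
    have := key A.symm (inv_memP Γ P hP hA)
    rwa [LinearIsometryEquiv.symm_symm] at this
  calc (fixSubmodule P)ᗮ ≤ ((Submodule.span ℝ (genSet Γ P))ᗮ)ᗮ :=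
        Submodule.orthogonal_le horth
    _ = Submodule.span ℝ (genSet Γ P) := Submodule.orthogonal_orthogonal _

omit hP

/-- The lattice of central translation vectors. -/
def LFix : AddSubgroup (E n) := LAdd Γ ⊓ (fixSubmodule P).toAddSubgroup

include hP

lemma span_LFix (hΓ : Iso.IsCrystallographic Γ) :
    Submodule.span ℝ ((LFix Γ P : AddSubgroup (E n)) : Set (E n)) = fixSubmodule P := by
  classical
  refine le_antisymm ?_ ?_
  · rw [Submodule.span_le]
    rintro v ⟨_, hv⟩
    exact hv
  · intro x hx
    have hcard : (0 : ℝ) < P.card := by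
      exact_mod_cast Finset.card_pos.mpr ⟨_, one_memP Γ P hP⟩
    set plin : E n →ₗ[ℝ] E n := ∑ A ∈ P, (A.toLinearEquiv : E n →ₗ[ℝ] E n) with hplin
    have hplin_apply : ∀ v, plin v = ∑ A ∈ P, A v := by
      intro v
      rw [hplin, LinearMap.sum_apply]
      rfl
    have hplin_fix : plin x = (P.card : ℝ) • x := by
      rw [hplin_apply]
      rw [Finset.sum_congr rfl fun A hA => hx A hA]
      simp [Finset.sum_const, ← Nat.cast_smul_eq_nsmul ℝ]
    have hmapL : ∀ v ∈ LAdd Γ, plin v ∈ LFix Γ P := by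
      intro v hv
      constructor
      · rw [hplin_apply]
        exact AddSubgroup.sum_mem _ fun A hA => LAdd_mapP Γ P hP hA hv
      · rw [hplin_apply]
        exact sum_mem_fix Γ P hP v
    have hxtop : x ∈ Submodule.span ℝ (LAdd Γ : Set (E n)) := by
      rw [span_LAdd_top Γ P hP hΓ]; trivial
    have hmem : plin x ∈ Submodule.span ℝ ((LFix Γ P : AddSubgroup (E n)) : Set (E n)) := by
      have h1 : plin x ∈ Submodule.map plin (Submodule.span ℝ (LAdd Γ : Set (E n))) :=
        Submodule.mem_map_of_mem hxtop
      rw [Submodule.map_span] at h1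
      refine Submodule.span_mono ?_ h1
      rintro _ ⟨v, hv, rfl⟩
      exact hmapL v hv
    have : x = (P.card : ℝ)⁻¹ • plin x := by
      rw [hplin_fix, smul_smul, inv_mul_cancel₀ (ne_of_gt hcard), one_smul]
    rw [this]
    exact Submodule.smul_mem _ _ hmem

/-- The kernel of the transfer, as a subgroup. -/
def Nsub (hP : ∀ A : E n ≃ₗᵢ[ℝ] E n, A ∈ P ↔ ∃ a : E n, (⟨a, A⟩ : Iso n) ∈ Γ) :
    Subgroup (Iso n) where
  carrier := {g : Iso n | g ∈ Γ ∧ ∑ A ∈ P, A g.a = 0}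
  mul_mem' := by
    rintro x y ⟨hx, hxs⟩ ⟨hy, hys⟩
    refine ⟨Γ.mul_mem hx hy, ?_⟩
    have : (x * y).a = x.a + x.A y.a := rfl
    rw [this]
    rw [Finset.sum_congr rfl fun A _ => map_add A x.a (x.A y.a)]
    rw [Finset.sum_add_distrib, hxs, sum_P_comp Γ P hP (memP_of_mem Γ P hP hx), hys,
      zero_add]
  one_mem' := by
    refine ⟨Γ.one_mem, ?_⟩
    simp
  inv_mem' := by
    rintro x ⟨hx, hxs⟩
    refine ⟨Γ.inv_mem hx, ?_⟩
    have : (x⁻¹).a = -(x.A.symm x.a) := rfl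
    rw [this]
    rw [Finset.sum_congr rfl fun A _ => map_neg A (x.A.symm x.a)]
    rw [Finset.sum_neg_distrib, sum_P_comp Γ P hP (inv_memP Γ P hP (memP_of_mem Γ P hP hx)),
      hxs, neg_zero]

lemma mem_Nsub {g : Iso n} : g ∈ Nsub Γ P hP ↔ g ∈ Γ ∧ ∑ A ∈ P, A g.a = 0 := Iff.rfl

lemma Nsub_normal : Iso.IsNormalIn (Nsub Γ P hP) Γ := by
  constructor
  · rintro g ⟨hg, -⟩; exact hg
  · rintro g hg x ⟨hx, hxs⟩
    refine ⟨Γ.mul_mem (Γ.mul_mem hg hx) (Γ.inv_mem hg), ?_⟩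
    set C : E n ≃ₗᵢ[ℝ] E n := (g.A.symm.trans x.A).trans g.A with hC
    have hCP : C ∈ P := mul_memP Γ P hP (mul_memP Γ P hP
      (inv_memP Γ P hP (memP_of_mem Γ P hP hg)) (memP_of_mem Γ P hP hx))
      (memP_of_mem Γ P hP hg)
    have ha : (g * x * g⁻¹).a = g.a + g.A x.a - C g.a := by
      show (g * x).a + (g * x).A (g⁻¹).a = _
      show g.a + g.A x.a + g.A (x.A (-(g.A.symm g.a))) = _
      rw [map_neg, map_neg]
      rw [sub_eq_add_neg]
      rfl
    rw [ha]
    have hsplit : ∀ A : E n ≃ₗᵢ[ℝ] E n,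
        A (g.a + g.A x.a - C g.a) = A g.a + A (g.A x.a) - A (C g.a) := by
      intro A
      rw [map_sub, map_add]
    rw [Finset.sum_congr rfl fun A _ => hsplit A]
    rw [Finset.sum_sub_distrib, Finset.sum_add_distrib]
    rw [sum_P_comp Γ P hP (memP_of_mem Γ P hP hg) x.a, hxs, add_zero]
    rw [sum_P_comp Γ P hP hCP g.a, sub_self]

lemma transVecs_Nsub :
    Iso.transVecs ((Nsub Γ P hP : Subgroup (Iso n)) : Set (Iso n)) =
      {v : E n | v ∈ LAdd Γ ∧ v ∈ (fixSubmodule P)ᗮ} := by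
  ext v
  simp only [Iso.transVecs, Set.mem_setOf_eq, SetLike.mem_coe, mem_Nsub]
  constructor
  · rintro ⟨h1, h2⟩
    exact ⟨h1, (key1 Γ P hP v).mp h2⟩
  · rintro ⟨h1, h2⟩
    exact ⟨h1, (key1 Γ P hP v).mpr h2⟩

lemma spanS_Nsub (hΓ : Iso.IsCrystallographic Γ) :
    Iso.spanS ((Nsub Γ P hP : Subgroup (Iso n)) : Set (Iso n)) = (fixSubmodule P)ᗮ := by
  rw [Iso.spanS, transVecs_Nsub Γ P hP]
  refine le_antisymm ?_ ?_
  · rw [Submodule.span_le]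
    rintro v ⟨-, hv⟩
    exact hv
  · refine le_trans (le_of_eq (span_genSet Γ P hP hΓ).symm) (Submodule.span_mono ?_)
    intro v hv
    exact ⟨genSet_subset_LAdd Γ P hP hv, genSet_subset_orth Γ P hP hv⟩

/-- The center `Z(Γ) = centralizer(Γ) ⊓ Γ`. -/
lemma mem_Zsub {v : E n} :
    Iso.trans v ∈ Subgroup.centralizer (Γ : Set (Iso n)) ⊓ Γ ↔ v ∈ LFix Γ P := by
  rw [Subgroup.mem_inf, Subgroup.mem_centralizer_iff]
  constructor
  · rintro ⟨hcen, hmem⟩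
    refine ⟨hmem, ?_⟩
    intro A hA
    obtain ⟨a, ha⟩ := (hP A).mp hA
    have := hcen _ ha
    have h1 : ((⟨a, A⟩ : Iso n) * Iso.trans v).a = (Iso.trans v * (⟨a, A⟩ : Iso n)).a := by
      rw [this]
    show A v = v
    have h2 : a + A v = v + a := by
      simpa [Iso.trans] using h1
    have := h2
    rw [add_comm v a] at this
    exact add_left_cancel this
  · rintro ⟨hmem, hfix⟩
    refine ⟨?_, hmem⟩
    intro g hg
    have hA := memP_of_mem Γ P hP hg
    refine Iso.ext ?_ ?_
    · show g.a + g.A v = v + g.a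
      rw [hfix g.A hA, add_comm]
    · show (Iso.trans v).A.trans g.A = g.A.trans (Iso.trans v).A
      ext w
      simp [Iso.trans]

lemma transVecs_Zsub :
    Iso.transVecs ((Subgroup.centralizer (Γ : Set (Iso n)) ⊓ Γ : Subgroup (Iso n)) : Set (Iso n)) =
      ((LFix Γ P : AddSubgroup (E n)) : Set (E n)) := by
  ext v
  simp only [Iso.transVecs, Set.mem_setOf_eq, SetLike.mem_coe]
  exact mem_Zsub Γ P hP

lemma spanS_Zsub (hΓ : Iso.IsCrystallographic Γ) :
    Iso.spanS ((Subgroup.centralizer (Γ : Set (Iso n)) ⊓ Γ : Subgroup (Iso n)) : Set (Iso n)) =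
      fixSubmodule P := by
  rw [Iso.spanS, transVecs_Zsub Γ P hP, span_LFix Γ P hP hΓ]

lemma completion_Nsub (hΓ : Iso.IsCrystallographic Γ) :
    Iso.completion Γ ((Nsub Γ P hP : Subgroup (Iso n)) : Set (Iso n)) =
      ((Nsub Γ P hP : Subgroup (Iso n)) : Set (Iso n)) := by
  ext g
  rw [Iso.completion, Set.mem_setOf_eq, spanS_Nsub Γ P hP hΓ,
    Submodule.orthogonal_orthogonal]
  constructor
  · rintro ⟨hg, ha, -⟩
    exact ⟨hg, (key1 Γ P hP g.a).mpr ha⟩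
  · rintro ⟨hg, hsum⟩
    exact ⟨hg, (key1 Γ P hP g.a).mp hsum, fun x hx => hx g.A (memP_of_mem Γ P hP hg)⟩

lemma completion_Zsub (hΓ : Iso.IsCrystallographic Γ) :
    Iso.completion Γ
        ((Subgroup.centralizer (Γ : Set (Iso n)) ⊓ Γ : Subgroup (Iso n)) : Set (Iso n)) =
      ((Subgroup.centralizer (Γ : Set (Iso n)) ⊓ Γ : Subgroup (Iso n)) : Set (Iso n)) := by
  ext g
  rw [Iso.completion, Set.mem_setOf_eq, spanS_Zsub Γ P hP hΓ]
  constructor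
  · rintro ⟨hg, ha, hfixo⟩
    have hgA : ∀ v : E n, g.A v = v := by
      intro v
      obtain ⟨y, hy, z, hz, rfl⟩ := (fixSubmodule P).exists_add_mem_mem_orthogonal v
      rw [map_add, hy g.A (memP_of_mem Γ P hP hg), hfixo z hz]
    rw [SetLike.mem_coe, Subgroup.mem_inf, Subgroup.mem_centralizer_iff]
    refine ⟨?_, hg⟩
    intro h hh
    refine Iso.ext ?_ ?_
    · show h.a + h.A g.a = g.a + g.A h.a
      rw [ha h.A (memP_of_mem Γ P hP hh), hgA h.a, add_comm]
    · show g.A.trans h.A = h.A.trans g.A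
      refine LinearIsometryEquiv.ext fun w => ?_
      show h.A (g.A w) = g.A (h.A w)
      rw [hgA w, hgA (h.A w)]
  · intro hg
    rw [SetLike.mem_coe, Subgroup.mem_inf, Subgroup.mem_centralizer_iff] at hg
    obtain ⟨hcen, hmem⟩ := hg
    have hgA : ∀ v ∈ LAdd Γ, g.A v = v := by
      intro v hv
      have h1 := hcen _ hv
      have h2 : (Iso.trans v * g).a = (g * Iso.trans v).a := by rw [h1]
      have h3 : v + g.a = g.a + g.A v := by
        simpa [Iso.trans] using h2
      rw [add_comm v g.a] at h3
      exact (add_left_cancel h3).symm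
    have hgA' : ∀ v : E n, g.A v = v := by
      intro v
      have hv : v ∈ Submodule.span ℝ (LAdd Γ : Set (E n)) := by
        rw [span_LAdd_top Γ P hP hΓ]; trivial
      induction hv using Submodule.span_induction with
      | mem x hx => exact hgA x hx
      | zero => simp
      | add x y _ _ hx hy => rw [map_add, hx, hy]
      | smul c x _ hx => rw [map_smul, hx]
    refine ⟨hmem, ?_, fun x _ => hgA' x⟩
    intro A hA
    obtain ⟨a, haA⟩ := (hP A).mp hA
    have h1 := hcen _ haA
    have h2 : ((⟨a, A⟩ : Iso n) * g).a = (g * (⟨a, A⟩ : Iso n)).a := by rw [h1]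
    have h3 : a + A g.a = g.a + g.A a := by
      simpa using h2
    rw [hgA' a, add_comm g.a a] at h3
    exact add_left_cancel h3

/-- Transfer as a monoid hom to `Multiplicative (E n)`. -/
def tau (hP : ∀ A : E n ≃ₗᵢ[ℝ] E n, A ∈ P ↔ ∃ a : E n, (⟨a, A⟩ : Iso n) ∈ Γ) :
    ↥Γ →* Multiplicative (E n) :=
  MonoidHom.mk' (fun g => Multiplicative.ofAdd (∑ A ∈ P, A (g : Iso n).a)) (by
    intro g h
    have h1 : ((g * h : ↥Γ) : Iso n).a = (g : Iso n).a + (g : Iso n).A (h : Iso n).a := rfl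
    refine congrArg Multiplicative.ofAdd ?_
    rw [h1, Finset.sum_congr rfl fun A _ => map_add A _ _, Finset.sum_add_distrib,
      sum_P_comp Γ P hP (memP_of_mem Γ P hP g.2) (h : Iso n).a]
    rfl)

lemma tau_apply (g : ↥Γ) :
    tau Γ P hP g = Multiplicative.ofAdd (∑ A ∈ P, A (g : Iso n).a) := rfl

omit hP

lemma trans_pow (v : E n) (r : ℕ) : (Iso.trans v) ^ r = Iso.trans (r • v) := by
  induction r with
  | zero => rw [pow_zero, zero_smul]; rfl

  | succ k ih => rw [pow_succ, ih, succ_nsmul, trans_add]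

include hP

open scoped commutatorElement in
lemma transM {v : E n} (hv : v ∈ AddSubgroup.closure (genSet Γ P)) :
    Iso.trans v ∈ Subgroup.map Γ.subtype (commutator ↥Γ) := by
  induction hv using AddSubgroup.closure_induction with
  | mem w hw =>
    obtain ⟨B, hB, s, hs, rfl⟩ := hw
    obtain ⟨b, hb⟩ := (hP B).mp hB
    set gel : ↥Γ := ⟨⟨b, B⟩, hb⟩ with hgel
    set tel : ↥Γ := ⟨Iso.trans s, hs⟩ with htel
    have hcomm : ⁅gel, tel⁆ ∈ commutator ↥Γ :=
      Subgroup.commutator_mem_commutator (Subgroup.mem_top _) (Subgroup.mem_top _)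
    refine ⟨⁅gel, tel⁆, hcomm, ?_⟩
    show ((⁅gel, tel⁆ : ↥Γ) : Iso n) = Iso.trans (B s - s)
    have hcoe : ((⁅gel, tel⁆ : ↥Γ) : Iso n) =
        (⟨b, B⟩ : Iso n) * Iso.trans s * (⟨b, B⟩ : Iso n)⁻¹ * (Iso.trans s)⁻¹ := rfl
    rw [hcoe, conj_trans, ← trans_neg, ← trans_add, sub_eq_add_neg]
  | zero => rw [trans_zero]; exact Subgroup.one_mem _
  | add x y _ _ hx hy => rw [trans_add]; exact Subgroup.mul_mem _ hx hy
  | neg x _ hx => rw [trans_neg]; exact Subgroup.inv_mem _ hx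

/-- Key torsion lemma: an element of `Γ` killed by the transfer is torsion in the
abelianization. -/
lemma keyTorsion (hΓ : Iso.IsCrystallographic Γ) (g : ↥Γ)
    (hg : ∑ A ∈ P, A (g : Iso n).a = 0) :
    ∃ m : ℕ, 0 < m ∧ (Abelianization.of g) ^ m = 1 := by
  classical
  set x : Iso n := (g : Iso n) with hx
  -- find a positive power with trivial rotational part
  obtain ⟨i, j, hij, hFij⟩ := Finite.exists_ne_map_eq_of_infinite
    (fun k : ℕ => (⟨(x ^ k).A, memP_of_mem Γ P hP (pow_mem g.2 k)⟩ : {A // A ∈ P}))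
  have hswap : ∃ i j : ℕ, i < j ∧ (x ^ i).A = (x ^ j).A := by
    rcases lt_or_gt_of_ne hij with h | h
    · exact ⟨i, j, h, congrArg Subtype.val hFij⟩
    · exact ⟨j, i, h, (congrArg Subtype.val hFij).symm⟩
  obtain ⟨i', j', hlt, hEq⟩ := hswap
  set m := j' - i' with hm
  have hmpos : 0 < m := Nat.sub_pos_of_lt hlt
  have hxmA : (x ^ m).A = LinearIsometryEquiv.refl ℝ (E n) := by
    have h1 : x ^ j' = x ^ i' * x ^ m := by
      rw [← pow_add, Nat.add_sub_cancel' hlt.le]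
    have h2 : (x ^ j').A = (x ^ m).A.trans ((x ^ i').A) := by
      rw [h1]; rfl
    rw [← hEq] at h2
    refine LinearIsometryEquiv.ext fun v => ?_
    have h3 := congrArg (fun (e : E n ≃ₗᵢ[ℝ] E n) => e v) h2
    simp only [LinearIsometryEquiv.trans_apply] at h3
    have h4 := congrArg (x ^ i').A.symm h3.symm
    rw [LinearIsometryEquiv.symm_apply_apply, LinearIsometryEquiv.symm_apply_apply] at h4
    exact h4
  set c : E n := (x ^ m).a with hc
  have hxm : x ^ m = Iso.trans c := Iso.ext rfl hxmA
  have hcL : c ∈ LAdd Γ := by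
    rw [mem_LAdd, ← hxm]
    exact pow_mem g.2 m
  have htaug : tau Γ P hP g = 1 := by
    rw [tau_apply, hg]; rfl
  have hsumc : ∑ A ∈ P, A c = 0 := by
    have h5 : tau Γ P hP (g ^ m) = 1 := by rw [map_pow, htaug, one_pow]
    have h6 : ((g ^ m : ↥Γ) : Iso n) = x ^ m := rfl
    rw [tau_apply, h6] at h5
    have := congrArg Multiplicative.toAdd h5
    simpa using this
  have hcFixo : c ∈ (fixSubmodule P)ᗮ := (key1 Γ P hP c).mp hsumc
  -- the commutator lattice
  set M : AddSubgroup (E n) := AddSubgroup.closure (genSet Γ P) with hM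
  set M₂ : AddSubgroup (E n) := M ⊔ LFix Γ P with hM₂
  have hML : (M : Set (E n)) ⊆ (LAdd Γ : Set (E n)) := by
    intro w hw
    exact (AddSubgroup.closure_le (LAdd Γ)).mpr (genSet_subset_LAdd Γ P hP) hw
  have hM₂L : (M₂ : Set (E n)) ⊆ (LAdd Γ : Set (E n)) := by
    intro w hw
    have : M₂ ≤ LAdd Γ :=
      sup_le ((AddSubgroup.closure_le (LAdd Γ)).mpr (genSet_subset_LAdd Γ P hP))
        inf_le_left
    exact this hw
  have hMFixo : ∀ w ∈ M, w ∈ (fixSubmodule P)ᗮ := by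
    intro w hw
    have : M ≤ ((fixSubmodule P)ᗮ).toAddSubgroup :=
      (AddSubgroup.closure_le _).mpr (genSet_subset_orth Γ P hP)
    exact this hw
  have hspan₂ : Submodule.span ℝ (M₂ : Set (E n)) = ⊤ := by
    refine le_antisymm le_top ?_
    have h3 : fixSubmodule P ≤ Submodule.span ℝ (M₂ : Set (E n)) := by
      rw [← span_LFix Γ P hP hΓ]
      refine Submodule.span_mono ?_
      intro w hw
      exact SetLike.le_def.mp le_sup_right hw
    have h4 : (fixSubmodule P)ᗮ ≤ Submodule.span ℝ (M₂ : Set (E n)) := by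
      rw [← span_genSet Γ P hP hΓ]
      refine Submodule.span_mono ?_
      intro w hw
      exact SetLike.le_def.mp le_sup_left (AddSubgroup.subset_closure hw)
    rw [← Submodule.sup_orthogonal_of_hasOrthogonalProjection (K := fixSubmodule P)]
    exact sup_le h3 h4
  obtain ⟨r, hr, hrc⟩ := lat Γ P hΓ hP M₂ hM₂L hspan₂ c hcL
  -- project to M
  have hrcM : (r : ℤ) • c ∈ M := by
    rw [hM₂, AddSubgroup.mem_sup] at hrc
    obtain ⟨y, hy, z, hz, hyz⟩ := hrc
    have hzFix : z ∈ fixSubmodule P := hz.2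
    have hzFixo : z ∈ (fixSubmodule P)ᗮ := by
      have h7 : z = (r : ℤ) • c - y := by rw [← hyz]; abel
      rw [h7]
      exact Submodule.sub_mem _ (zsmul_mem hcFixo _) (hMFixo y hy)
    have hz0 : z = 0 := by
      have := (Submodule.mem_orthogonal _ z).mp hzFixo z hzFix
      exact inner_self_eq_zero.mp this
    rw [hz0, add_zero] at hyz
    rwa [← hyz]
  have hrcM' : (r • c : E n) ∈ M := by
    rwa [natCast_zsmul] at hrcM
  -- conclude
  have hmap := transM Γ P hP hrcM'
  have hcoe : ((g ^ (m * r) : ↥Γ) : Iso n) = Iso.trans (r • c) := by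
    have : ((g ^ (m * r) : ↥Γ) : Iso n) = x ^ (m * r) := rfl
    rw [this, pow_mul, hxm, trans_pow]
  rw [← hcoe] at hmap
  obtain ⟨y, hy, hyeq⟩ := hmap
  have hyg : y = g ^ (m * r) := Subtype.ext hyeq
  rw [hyg] at hy
  refine ⟨m * r, Nat.mul_pos hmpos hr, ?_⟩
  rw [← map_pow]
  exact (QuotientGroup.eq_one_iff _).mpr hy

end Aux

/-- Let `Γ` be an `n`-dimensional crystallographic group with point
group `P` and first Betti number `β₁`. The kernel `N` of the transfer `tr : Γ → T`,
`tr(b+B) = (Σ_{A∈P} A) b + I` -- i.e. `{g ∈ Γ : Σ_{A∈P} A g.a = 0}` -- equals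
`{b+B ∈ Γ : b ∈ Fix(P)ᗮ}`; it is the unique normal subgroup of `Γ` with `Γ/N` free
abelian of rank `β₁`; `Span(N) = Fix(P)ᗮ` while `Span(Z(Γ)) = Fix(P)`, so `N` and
`Z(Γ)` are orthogonal complete normal subgroups. -/
theorem stmt15 {n : ℕ} (Γ : Subgroup (Iso n)) (hΓ : Iso.IsCrystallographic Γ)
    (P : Finset (E n ≃ₗᵢ[ℝ] E n))
    (hP : ∀ A : E n ≃ₗᵢ[ℝ] E n, A ∈ P ↔ ∃ a : E n, (⟨a, A⟩ : Iso n) ∈ Γ)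
    (G : Type) [AddCommGroup G] [Finite G] (β₁ : ℕ)
    (hab : Nonempty (Additive (Abelianization ↥Γ) ≃+ (G × (Fin β₁ → ℤ)))) :
    ({g : Iso n | g ∈ Γ ∧ ∑ A ∈ P, A g.a = 0}
        = {g : Iso n | g ∈ Γ ∧ g.a ∈ (fixSubmodule P)ᗮ}) ∧
    ∃ N : Subgroup (Iso n),
      (N : Set (Iso n)) = {g : Iso n | g ∈ Γ ∧ ∑ A ∈ P, A g.a = 0} ∧
      Iso.IsNormalIn N Γ ∧
      (∃ f : ↥Γ →* Multiplicative (Fin β₁ → ℤ),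
        Function.Surjective f ∧ ∀ g : ↥Γ, f g = 1 ↔ (g : Iso n) ∈ N) ∧
      (∀ M : Subgroup (Iso n), Iso.IsNormalIn M Γ →
        (∃ f : ↥Γ →* Multiplicative (Fin β₁ → ℤ),
          Function.Surjective f ∧ ∀ g : ↥Γ, f g = 1 ↔ (g : Iso n) ∈ M) → M = N) ∧
      Iso.spanS (N : Set (Iso n)) = (fixSubmodule P)ᗮ ∧
      Iso.spanS ((Subgroup.centralizer (Γ : Set (Iso n)) ⊓ Γ : Subgroup (Iso n)) : Set (Iso n))
        = fixSubmodule P ∧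
      Iso.completion Γ (N : Set (Iso n)) = (N : Set (Iso n)) ∧
      Iso.completion Γ ((Subgroup.centralizer (Γ : Set (Iso n)) ⊓ Γ : Subgroup (Iso n)) : Set (Iso n))
        = ((Subgroup.centralizer (Γ : Set (Iso n)) ⊓ Γ : Subgroup (Iso n)) : Set (Iso n)) := by
  classical
  obtain ⟨e⟩ := hab
  have hGpos : 0 < Nat.card G := Nat.card_pos
  -- torsion elements of `G × ℤ^β` have trivial second component, and conversely
  have lemA : ∀ q : Abelianization ↥Γ,
      (e (Additive.ofMul q)).2 = 0 ↔ ∃ m : ℕ, 0 < m ∧ q ^ m = 1 := by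
    intro q
    constructor
    · intro hp2
      refine ⟨Nat.card G, hGpos, ?_⟩
      have hsm : (Nat.card G) • e (Additive.ofMul q) = 0 := by
        refine Prod.ext ?_ ?_
        · show (Nat.card G) • (e (Additive.ofMul q)).1 = 0
          exact card_nsmul_eq_zero'
        · show (Nat.card G) • (e (Additive.ofMul q)).2 = 0
          rw [hp2, smul_zero]
      have h1 : e (Additive.ofMul (q ^ Nat.card G)) = 0 := by
        rw [ofMul_pow, map_nsmul, hsm]
      have h2 : Additive.ofMul (q ^ Nat.card G) = 0 := by
        apply e.injective
        rw [h1, map_zero]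
      exact ofMul_eq_zero.mp h2
    · rintro ⟨m, hm, hqm⟩
      have h1 : (m : ℤ) • (e (Additive.ofMul q)).2 = 0 := by
        have h2 : e (Additive.ofMul (q ^ m)) = 0 := by
          rw [hqm]
          rw [show Additive.ofMul (1 : Abelianization ↥Γ) = 0 from rfl, map_zero]
        rw [ofMul_pow, map_nsmul] at h2
        have h3 := congrArg Prod.snd h2
        simpa [natCast_zsmul] using h3
      have hm0 : (m : ℤ) ≠ 0 := by exact_mod_cast hm.ne'
      exact (smul_eq_zero.mp h1).resolve_left hm0
  have lemB : ∀ g : ↥Γ, (∃ m : ℕ, 0 < m ∧ (Abelianization.of g) ^ m = 1) ↔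
      ∑ A ∈ P, A (g : Iso n).a = 0 := by
    intro g
    constructor
    · rintro ⟨m, hm, h1⟩
      have h2 : Abelianization.lift (tau Γ P hP) ((Abelianization.of g) ^ m) = 1 := by
        rw [h1, map_one]
      rw [map_pow, Abelianization.lift_apply_of, tau_apply, ← ofAdd_nsmul] at h2
      have h3 : m • (∑ A ∈ P, A (g : Iso n).a) = 0 := ofAdd_eq_one.mp h2
      have h4 : (m : ℝ) • (∑ A ∈ P, A (g : Iso n).a) = 0 := by
        rw [Nat.cast_smul_eq_nsmul, h3]
      have hm0 : (m : ℝ) ≠ 0 := by exact_mod_cast hm.ne'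
      exact (smul_eq_zero.mp h4).resolve_left hm0
    · intro hg
      exact keyTorsion Γ P hP hΓ g hg
  have hofsurj : Function.Surjective (Abelianization.of (G := ↥Γ)) := by
    intro q
    obtain ⟨a, ha⟩ := Quot.exists_rep q
    exact ⟨a, by rw [← Abelianization.mk_eq_of]; exact ha⟩
  -- any surjection onto `ℤ^β₁` has kernel the torsion elements
  have claimF : ∀ F : ↥Γ →* Multiplicative (Fin β₁ → ℤ), Function.Surjective F →
      ∀ g : ↥Γ, (F g = 1 ↔ ∃ m : ℕ, 0 < m ∧ (Abelianization.of g) ^ m = 1) := by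
    intro F hFsurj g
    set FAb := Abelianization.lift F with hFAb
    set ψ : G × (Fin β₁ → ℤ) →+ (Fin β₁ → ℤ) :=
      AddMonoidHom.mk' (fun p => Multiplicative.toAdd (FAb (Additive.toMul (e.symm p))))
        (by
          intro p q
          simp only [map_add, toMul_add, map_mul, toAdd_mul]) with hψ
    have hψG : ∀ gg : G, ψ (gg, 0) = 0 := by
      intro gg
      have h1 : (Nat.card G) • ((gg, 0) : G × (Fin β₁ → ℤ)) = 0 := by
        refine Prod.ext ?_ ?_
        · show (Nat.card G) • gg = 0
          exact card_nsmul_eq_zero'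
        · show (Nat.card G) • (0 : Fin β₁ → ℤ) = 0
          rw [smul_zero]
      have h2 : (Nat.card G) • ψ (gg, 0) = 0 := by
        rw [← map_nsmul, h1, map_zero]
      funext i
      have h3 : (Nat.card G : ℤ) * (ψ (gg, 0) i) = 0 := by
        have := congrFun h2 i
        simpa [nsmul_eq_mul] using this
      have h4 : (Nat.card G : ℤ) ≠ 0 := by exact_mod_cast hGpos.ne'
      exact (mul_eq_zero.mp h3).resolve_left h4
    have hψdec : ∀ p : G × (Fin β₁ → ℤ), ψ p = ψ (0, p.2) := by
      intro p
      have h1 : p = (p.1, 0) + (0, p.2) := by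
        refine Prod.ext ?_ ?_ <;> simp
      rw [h1, map_add, hψG, zero_add]
      simp
    set ψ₂ : (Fin β₁ → ℤ) →+ (Fin β₁ → ℤ) :=
      ψ.comp (AddMonoidHom.inr G (Fin β₁ → ℤ)) with hψ₂
    have hψ₂app : ∀ y, ψ₂ y = ψ (0, y) := fun y => rfl
    have hψval : ∀ h : ↥Γ, ψ (e (Additive.ofMul (Abelianization.of h))) =
        Multiplicative.toAdd (F h) := by
      intro h
      show Multiplicative.toAdd (FAb (Additive.toMul
        (e.symm (e (Additive.ofMul (Abelianization.of h)))))) = _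
      rw [e.symm_apply_apply]
      rw [show Additive.toMul (Additive.ofMul (Abelianization.of h)) = Abelianization.of h
        from rfl]
      rw [hFAb, Abelianization.lift_apply_of]
    have hψ₂surj : Function.Surjective ψ₂ := by
      intro y
      obtain ⟨gg, hgg⟩ := hFsurj (Multiplicative.ofAdd y)
      refine ⟨(e (Additive.ofMul (Abelianization.of gg))).2, ?_⟩
      rw [hψ₂app, ← hψdec, hψval, hgg]
      rfl
    have hψ₂inj : Function.Injective ψ₂ := by
      have h5 : Function.Surjective ψ₂.toIntLinearMap := hψ₂surj
      have := OrzechProperty.injective_of_surjective_endomorphism ψ₂.toIntLinearMap h5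
      exact this
    constructor
    · intro hFg
      rw [← lemA]
      have h6 : ψ₂ ((e (Additive.ofMul (Abelianization.of g))).2) = 0 := by
        rw [hψ₂app, ← hψdec, hψval, hFg]
        rfl
      have h7 : ψ₂ (0 : Fin β₁ → ℤ) = 0 := map_zero _
      exact hψ₂inj (h6.trans h7.symm)
    · intro hT
      have h8 : (e (Additive.ofMul (Abelianization.of g))).2 = 0 := (lemA _).mpr hT
      have h9 : Multiplicative.toAdd (F g) = 0 := by
        rw [← hψval, hψdec, ← hψ₂app, h8, map_zero]
      calc F g = Multiplicative.ofAdd (Multiplicative.toAdd (F g)) := rfl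
        _ = Multiplicative.ofAdd 0 := by rw [h9]
        _ = 1 := rfl
  -- the canonical surjection
  set f : ↥Γ →* Multiplicative (Fin β₁ → ℤ) :=
    MonoidHom.mk' (fun g => Multiplicative.ofAdd
      ((e (Additive.ofMul (Abelianization.of g))).2)) (by
        intro g h
        rw [← ofAdd_add]
        refine congrArg Multiplicative.ofAdd ?_
        rw [map_mul, ofMul_mul, map_add]
        rfl) with hf
  have hfapp : ∀ g : ↥Γ, f g = Multiplicative.ofAdd
      ((e (Additive.ofMul (Abelianization.of g))).2) := fun g => rfl
  have hfsurj : Function.Surjective f := by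
    intro y
    obtain ⟨g, hg⟩ := hofsurj (Additive.toMul (e.symm (0, Multiplicative.toAdd y)))
    refine ⟨g, ?_⟩
    rw [hfapp, hg]
    rw [show Additive.ofMul (Additive.toMul (e.symm (0, Multiplicative.toAdd y)))
      = e.symm (0, Multiplicative.toAdd y) from rfl]
    rw [e.apply_symm_apply]
    rfl
  have hfker : ∀ g : ↥Γ, f g = 1 ↔ (g : Iso n) ∈ Nsub Γ P hP := by
    intro g
    rw [hfapp, ofAdd_eq_one, lemA, lemB]
    rw [mem_Nsub]
    exact ⟨fun h => ⟨g.2, h⟩, fun h => h.2⟩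
  constructor
  · ext g
    simp only [Set.mem_setOf_eq]
    exact and_congr_right fun _ => key1 Γ P hP g.a
  · refine ⟨Nsub Γ P hP, rfl, Nsub_normal Γ P hP, ⟨f, hfsurj, hfker⟩, ?_,
      spanS_Nsub Γ P hP hΓ, spanS_Zsub Γ P hP hΓ, completion_Nsub Γ P hP hΓ,
      completion_Zsub Γ P hP hΓ⟩
    rintro M ⟨hMle, -⟩ ⟨fM, hfMs, hfMk⟩
    ext x
    constructor
    · intro hx
      have hxΓ : x ∈ Γ := hMle hx
      have h1 : fM ⟨x, hxΓ⟩ = 1 := (hfMk ⟨x, hxΓ⟩).mpr hx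
      have h2 := (claimF fM hfMs ⟨x, hxΓ⟩).mp h1
      have h3 := (claimF f hfsurj ⟨x, hxΓ⟩).mpr h2
      exact (hfker ⟨x, hxΓ⟩).mp h3
    · intro hx
      have hxΓ : x ∈ Γ := hx.1
      have h3 : f ⟨x, hxΓ⟩ = 1 := (hfker ⟨x, hxΓ⟩).mpr hx
      have h2 := (claimF f hfsurj ⟨x, hxΓ⟩).mp h3
      have h1 := (claimF fM hfMs ⟨x, hxΓ⟩).mpr h2
      exact (hfMk ⟨x, hxΓ⟩).mp h1
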